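/- Every unit α of the commutative ring ℚ ⊗_ℤ ∏_p ℤ_p can be written as α = (q ⊗ 1) · (1 ⊗ u) for some q ∈ ℚˣ and some unit u of the ring ∏_p ℤ_p. (This expresses that the ideal class group of ℤ is trivial: the map ℚˣ × (∏_p ℤ_p)ˣ → (ℚ ⊗_ℤ ∏_p ℤ_p)ˣ is surjective.) -/

import Mathlib

open scoped TensorProduct

instance (p : Nat.Primes) : Fact (p : ℕ).Prime := ⟨p.2⟩

/-- The product over all prime numbers `p` of the rings of `p`-adic integers. -/
abbrev Zhat : Type := Π p : Nat.Primes, ℤ_[(p : ℕ)]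



lemma exists_denom (t : ℚ ⊗[ℤ] Zhat) :
    ∃ (n : ℕ) (x : Zhat), 0 < n ∧ t = (1 / (n : ℚ)) ⊗ₜ[ℤ] x := by
  induction t with
  | zero => exact ⟨1, 0, one_pos, by simp⟩
  | tmul q x =>
    refine ⟨q.den, q.num • x, q.pos, ?_⟩
    rw [TensorProduct.tmul_smul, TensorProduct.smul_tmul']
    congr 1
    rw [zsmul_eq_mul]
    rw [mul_one_div, Rat.num_div_den]
  | add t1 t2 h1 h2 =>
    obtain ⟨n1, x1, hn1, rfl⟩ := h1
    obtain ⟨n2, x2, hn2, rfl⟩ := h2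
    refine ⟨n1 * n2, (n2 : ℤ) • x1 + (n1 : ℤ) • x2, Nat.mul_pos hn1 hn2, ?_⟩
    rw [TensorProduct.tmul_add, TensorProduct.tmul_smul, TensorProduct.tmul_smul,
      TensorProduct.smul_tmul', TensorProduct.smul_tmul']
    have e1 : (n2 : ℤ) • (1 / ((n1*n2 : ℕ) : ℚ)) = 1 / (n1 : ℚ) := by
      rw [zsmul_eq_mul]; push_cast; field_simp
    have e2 : (n1 : ℤ) • (1 / ((n1*n2 : ℕ) : ℚ)) = 1 / (n2 : ℚ) := by
      rw [zsmul_eq_mul]; push_cast; field_simp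
    rw [e1, e2]

abbrev Qhat : Type := Π p : Nat.Primes, ℚ_[(p : ℕ)]

noncomputable def phi : ℚ ⊗[ℤ] Zhat →ₐ[ℤ] Qhat :=
  Algebra.TensorProduct.productMap
    (algebraMap ℚ Qhat).toIntAlgHom
    (Pi.ringHom fun p => (PadicInt.Coe.ringHom).comp (Pi.evalRingHom _ p)).toIntAlgHom

lemma phi_tmul (q : ℚ) (x : Zhat) (p : Nat.Primes) :
    phi (q ⊗ₜ[ℤ] x) p = (q : ℚ_[(p:ℕ)]) * (x p : ℚ_[(p:ℕ)]) := by
  simp [phi, Algebra.TensorProduct.productMap_apply_tmul]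
  rfl

lemma unit_part {p : ℕ} [Fact p.Prime] {x d : ℤ_[p]} (hx : x ≠ 0) (hd : d ≠ 0)
    (h : d.valuation = x.valuation) :
    x = d * ((PadicInt.unitCoeff hx) * (PadicInt.unitCoeff hd)⁻¹ : ℤ_[p]ˣ) := by
  have h' : d.valuation = x.valuation := by rw [h]
  have specd : d = (PadicInt.unitCoeff hd : ℤ_[p]) * (p:ℤ_[p]) ^ x.valuation := by
    rw [← h']; exact PadicInt.unitCoeff_spec hd
  have hne : (PadicInt.unitCoeff hd : ℤ_[p]) * ((PadicInt.unitCoeff hd)⁻¹ : ℤ_[p]ˣ) = 1 :=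
    (PadicInt.unitCoeff hd).mul_inv
  have key : d * ((PadicInt.unitCoeff hd)⁻¹ : ℤ_[p]ˣ) = (p:ℤ_[p]) ^ x.valuation := by
    calc d * ((PadicInt.unitCoeff hd)⁻¹ : ℤ_[p]ˣ)
        = ((PadicInt.unitCoeff hd : ℤ_[p]) * (p:ℤ_[p]) ^ x.valuation) *
          ((PadicInt.unitCoeff hd)⁻¹ : ℤ_[p]ˣ) := by rw [← specd]
      _ = ((PadicInt.unitCoeff hd : ℤ_[p]) * ((PadicInt.unitCoeff hd)⁻¹ : ℤ_[p]ˣ)) *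
          (p:ℤ_[p]) ^ x.valuation := by ring
      _ = (p:ℤ_[p]) ^ x.valuation := by rw [hne, one_mul]
  calc x = (PadicInt.unitCoeff hx : ℤ_[p]) * (p:ℤ_[p]) ^ x.valuation :=
        PadicInt.unitCoeff_spec hx
    _ = (PadicInt.unitCoeff hx : ℤ_[p]) * (d * ((PadicInt.unitCoeff hd)⁻¹ : ℤ_[p]ˣ)) := by
        rw [key]
    _ = d * ((PadicInt.unitCoeff hx) * (PadicInt.unitCoeff hd)⁻¹ : ℤ_[p]ˣ) := by
        push_cast; ring

/-- Every unit `α` of `ℚ ⊗[ℤ] ∏_p ℤ_p` factors as `(q ⊗ 1) · (1 ⊗ u)` with `q ∈ ℚˣ` and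
`u ∈ (∏_p ℤ_p)ˣ`; this expresses the triviality of the ideal class group of `ℤ`. -/
theorem units_of_tensor_factor (α : (ℚ ⊗[ℤ] Zhat)ˣ) :
    ∃ (q : ℚˣ) (u : Zhatˣ),
      (α : ℚ ⊗[ℤ] Zhat) = ((q : ℚ) ⊗ₜ[ℤ] (1 : Zhat)) * ((1 : ℚ) ⊗ₜ[ℤ] (u : Zhat)) := by
  obtain ⟨n, x, hn, hα⟩ := exists_denom (α : ℚ ⊗[ℤ] Zhat)
  obtain ⟨m, y, hm, hβ⟩ := exists_denom ((α⁻¹ : (ℚ ⊗[ℤ] Zhat)ˣ) : ℚ ⊗[ℤ] Zhat)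
  have hnm : (n * m : ℕ) ≠ 0 := by positivity
  have hmul : (α : ℚ ⊗[ℤ] Zhat) * ((α⁻¹ : (ℚ ⊗[ℤ] Zhat)ˣ) : ℚ ⊗[ℤ] Zhat) = 1 := α.mul_inv
  have hphi := congrArg phi hmul
  rw [hα, hβ, map_mul, map_one] at hphi
  -- componentwise : x p * y p = n*m
  have hxy : ∀ p : Nat.Primes, (x p) * (y p) = ((n*m : ℕ) : ℤ_[(p:ℕ)]) := by
    intro p
    have h1 := congrFun hphi p
    rw [Pi.mul_apply, Pi.one_apply, phi_tmul, phi_tmul] at h1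
    have hn' : ((n : ℚ_[(p:ℕ)])) ≠ 0 := Nat.cast_ne_zero.mpr hn.ne'
    have hm' : ((m : ℚ_[(p:ℕ)])) ≠ 0 := Nat.cast_ne_zero.mpr hm.ne'
    apply Subtype.coe_injective
    push_cast
    push_cast at h1
    field_simp at h1
    linear_combination h1
  have hx0 : ∀ p : Nat.Primes, x p ≠ 0 := by
    intro p h
    have := hxy p
    rw [h, zero_mul] at this
    exact (Nat.cast_ne_zero.mpr hnm) this.symm
  have hy0 : ∀ p : Nat.Primes, y p ≠ 0 := by
    intro p h
    have := hxy p
    rw [h, mul_zero] at this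
    exact (Nat.cast_ne_zero.mpr hnm) this.symm
  have hval : ∀ p : Nat.Primes,
      (x p).valuation + (y p).valuation = padicValNat (p:ℕ) (n*m) := by
    intro p
    have h2 : Padic.valuation ((x p : ℚ_[(p:ℕ)]) * (y p : ℚ_[(p:ℕ)]))
        = Padic.valuation (((n*m : ℕ) : ℚ_[(p:ℕ)])) := by
      rw [← PadicInt.coe_mul, hxy p]; push_cast; ring_nf
    rw [Padic.valuation_mul (PadicInt.coe_ne_zero.mpr (hx0 p)) (PadicInt.coe_ne_zero.mpr (hy0 p)),
      Padic.valuation_natCast, PadicInt.valuation_coe, PadicInt.valuation_coe] at h2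
    exact_mod_cast h2
  -- the "content" of x
  set S := (n*m).primeFactors with hS
  set E : ℕ → ℕ := fun q => if h : q.Prime then
      haveI : Fact q.Prime := ⟨h⟩
      (x ⟨q, h⟩).valuation else 0 with hE
  set d : ℕ := ∏ q ∈ S, q ^ E q with hd
  have hd0 : d ≠ 0 := Finset.prod_ne_zero_iff.mpr fun q hq =>
    pow_ne_zero _ (Nat.prime_of_mem_primeFactors hq).pos.ne'
  have hfac : d.factorization = ∑ q ∈ S, Finsupp.single q (E q) := by
    rw [hd, Nat.factorization_prod fun q hq => pow_ne_zero _
      (Nat.prime_of_mem_primeFactors hq).pos.ne']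
    exact Finset.sum_congr rfl fun q hq =>
      (Nat.Prime.factorization_pow (Nat.prime_of_mem_primeFactors hq))
  have happ : ∀ q : ℕ, d.factorization q = if q ∈ S then E q else 0 := by
    intro q
    rw [hfac]
    rw [Finset.sum_apply']
    simp [Finsupp.single_apply]
  have hvald : ∀ p : Nat.Primes, ((d : ℤ_[(p:ℕ)])).valuation = (x p).valuation := by
    intro p
    have hcast : ((d : ℤ_[(p:ℕ)])).valuation = padicValNat (p:ℕ) d := by
      rw [← Nat.cast_inj (R := ℤ), ← PadicInt.valuation_coe, PadicInt.coe_natCast,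
        Padic.valuation_natCast]
    have hfd : padicValNat (p:ℕ) d = d.factorization (p:ℕ) :=
      (Nat.factorization_def d p.2).symm
    by_cases hp : (p:ℕ) ∈ S
    · have hEp : E (p:ℕ) = (x p).valuation := by
        simp only [hE]
        rw [dif_pos p.2]
        rfl
      rw [hcast, hfd, happ, if_pos hp, hEp]
    · have hnd : ¬ (p:ℕ) ∣ (n*m) := fun hdvd => hp (Nat.mem_primeFactors.mpr ⟨p.2, hdvd, hnm⟩)
      have h3 : padicValNat (p:ℕ) (n*m) = 0 := padicValNat.eq_zero_of_not_dvd hnd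
      have h4 := hval p
      have h5 := Nat.zero_le (x p).valuation
      have h6 := Nat.zero_le (y p).valuation
      rw [h3] at h4
      rw [hcast, hfd, happ, if_neg hp]
      omega
  have hd0' : ∀ p : Nat.Primes, ((d : ℤ_[(p:ℕ)])) ≠ 0 :=
    fun p => Nat.cast_ne_zero.mpr hd0
  -- the unit
  set u : ∀ p : Nat.Primes, (ℤ_[(p:ℕ)])ˣ := fun p =>
    (PadicInt.unitCoeff (hx0 p)) * (PadicInt.unitCoeff (hd0' p))⁻¹ with hu
  have hxdu : ∀ p : Nat.Primes, x p = (d : ℤ_[(p:ℕ)]) * (u p) :=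
    fun p => unit_part (hx0 p) (hd0' p) (hvald p)
  refine ⟨Units.mk0 ((d : ℚ)/(n : ℚ))
      (div_ne_zero (Nat.cast_ne_zero.mpr hd0) (Nat.cast_ne_zero.mpr hn.ne')),
    ⟨fun p => ↑(u p), fun p => ↑(u p)⁻¹,
      funext fun p => (u p).mul_inv, funext fun p => (u p).inv_mul⟩, ?_⟩
  have hxU : x = ((d : ℕ) : ℤ) • (fun p => ((u p : ℤ_[(p:ℕ)])) : Zhat) := by
    funext p
    rw [hxdu p]
    show _ = ((d : ℕ) : ℤ) • (u p : ℤ_[(p:ℕ)])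
    rw [zsmul_eq_mul]
    push_cast
    ring
  rw [hα, hxU, TensorProduct.tmul_smul, TensorProduct.smul_tmul',
    Algebra.TensorProduct.tmul_mul_tmul, one_mul, mul_one]
  congr 1
  rw [zsmul_eq_mul]
  push_cast
  field_simp
  rw [Units.val_mk0, mul_div_cancel₀ _ (Nat.cast_ne_zero.mpr hn.ne')]
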